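/- Let λ > 0 and μ > 0, and suppose P_λ is μ-strongly convex, i.e. β ↦ P_λ(β) − (μ/2)‖β‖₂² is convex on ℝ^p. Let β̂ be a minimizer of P_λ with P_λ(β̂) finite. Then for every β ∈ ℝ^p and every θ ∈ ℝ^n with f*(−λθ) and Ω*(X^⊤θ) finite, one has ‖β̂ − β‖₂ ≤ √(2 Gap_λ(β, θ) / μ) (in particular Gap_λ(β, θ) ≥ 0). -/

import Mathlib

open scoped RealInnerProductSpace

noncomputable section

abbrev Vec (d : ℕ) := EuclideanSpace ℝ (Fin d)

/-- Matrix–vector product, landing in Euclidean space. -/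
def mv {a b : ℕ} (M : Matrix (Fin a) (Fin b) ℝ) (v : Vec b) : Vec a := WithLp.toLp 2 (M.mulVec v)

/-- Fenchel conjugate of a real-valued function, with values in `EReal`. -/
noncomputable def rconj {d : ℕ} (f : Vec d → ℝ) (u : Vec d) : EReal :=
  ⨆ x, ((⟪u, x⟫ - f x : ℝ) : EReal)

/-- Fenchel conjugate of an `EReal`-valued function. -/
noncomputable def econj {d : ℕ} (g : Vec d → EReal) (u : Vec d) : EReal :=
  ⨆ x, (((⟪u, x⟫ : ℝ) : EReal) - g x)

/-- Primal objective `P_λ(β) = f(Xβ) + λ Ω(β)`, with values in `EReal`. -/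
noncomputable def Pfun {n p : ℕ} (X : Matrix (Fin n) (Fin p) ℝ)
    (f : Vec n → ℝ) (Ω : Vec p → EReal) (lam : ℝ) (b : Vec p) : EReal :=
  ((f (mv X b) : ℝ) : EReal) + ((lam : ℝ) : EReal) * Ω b

/-- Convexity of an `EReal`-valued function, via convex-combination inequalities. -/
def ECvx {d : ℕ} (g : Vec d → EReal) : Prop :=
  ∀ b1 b2 : Vec d, ∀ t : ℝ, 0 ≤ t → t ≤ 1 →
    g (t • b1 + (1 - t) • b2) ≤
      ((t : ℝ) : EReal) * g b1 + (((1 - t) : ℝ) : EReal) * g b2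

/-- Adjoint identity. -/
lemma mv_adjoint {n p : ℕ} (X : Matrix (Fin n) (Fin p) ℝ) (θ : Vec n) (b : Vec p) :
    ⟪mv X.transpose θ, b⟫ = ⟪θ, mv X b⟫ := by
  simp only [PiLp.inner_apply, RCLike.inner_apply, conj_trivial, mv, Matrix.mulVec,
    dotProduct, PiLp.toLp_apply, Matrix.transpose_apply, Finset.sum_mul, Finset.mul_sum]
  rw [Finset.sum_comm]
  apply Finset.sum_congr rfl; intros; apply Finset.sum_congr rfl; intros; ring

lemma comb_norm_sq {d : ℕ} (t : ℝ) (x y : Vec d) :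
    ‖t • x + (1-t) • y‖^2 = t*‖x‖^2 + (1-t)*‖y‖^2 - t*(1-t)*‖x-y‖^2 := by
  simp only [← real_inner_self_eq_norm_sq, inner_add_add_self, inner_sub_sub_self,
    real_inner_smul_left, real_inner_smul_right]
  ring

/-- Lemma: gap safe region.
`P_λ` is `μ`-strongly convex (`β ↦ P_λ(β) - (μ/2)‖β‖²` is convex), `β̂` minimizes
`P_λ` with finite optimal value.  Then for every `β, θ` with `f*(-λθ) = fs` and
`Ω*(Xᵀθ) = Ωs` finite and finite duality gap
`G = f(Xβ) + fs + λ(Ω(β) + Ωs)`, one has `0 ≤ G` and `‖β̂ - β‖₂ ≤ √(2G/μ)`. -/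
theorem stmt15 {n p : ℕ} (X : Matrix (Fin n) (Fin p) ℝ)
    (f : Vec n → ℝ) (hconv : ConvexOn ℝ Set.univ f)
    (Ω : Vec p → EReal)
    (lam μ : ℝ) (hlam : 0 < lam) (hμ : 0 < μ)
    (hsc : ECvx fun b : Vec p =>
      Pfun X f Ω lam b - ((μ / 2 * ‖b‖ ^ 2 : ℝ) : EReal))
    (bhat : Vec p)
    (hmin : ∀ b, Pfun X f Ω lam bhat ≤ Pfun X f Ω lam b)
    (hfin : ∃ r : ℝ, Pfun X f Ω lam bhat = (r : EReal)) :
    ∀ (β : Vec p) (θ : Vec n) (fs Ωs : ℝ),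
      rconj f ((-lam) • θ) = (fs : EReal) →
      econj Ω (mv X.transpose θ) = (Ωs : EReal) →
      ∀ G : ℝ,
        ((f (mv X β) : ℝ) : EReal) + ((fs : ℝ) : EReal)
            + ((lam : ℝ) : EReal) * (Ω β + ((Ωs : ℝ) : EReal)) = (G : EReal) →
        0 ≤ G ∧ ‖bhat - β‖ ≤ Real.sqrt (2 * G / μ) := by
  intro β θ fs Ωs hfs hΩs G hG
  obtain ⟨r, hr⟩ := hfin
  -- Ω bhat is finite
  have hωh : ∃ w : ℝ, Ω bhat = (w : EReal) := by
    refine ⟨(Ω bhat).toReal, (EReal.coe_toReal ?_ ?_).symm⟩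
    · intro h
      rw [Pfun, h, EReal.coe_mul_top_of_pos hlam, EReal.coe_add_top] at hr
      exact EReal.top_ne_coe r hr
    · intro h
      rw [Pfun, h, EReal.coe_mul_bot_of_pos hlam, EReal.add_bot] at hr
      exact EReal.bot_ne_coe r hr
  obtain ⟨ωh, hωh⟩ := hωh
  have hr' : f (mv X bhat) + lam * ωh = r := by
    rw [Pfun, hωh] at hr; exact_mod_cast hr
  -- Ω β is finite
  have hω : ∃ w : ℝ, Ω β = (w : EReal) := by
    refine ⟨(Ω β).toReal, (EReal.coe_toReal ?_ ?_).symm⟩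
    · intro h
      rw [h, EReal.top_add_coe, EReal.coe_mul_top_of_pos hlam, ← EReal.coe_add,
        EReal.coe_add_top] at hG
      exact EReal.top_ne_coe G hG
    · intro h
      rw [h, EReal.bot_add, EReal.coe_mul_bot_of_pos hlam, EReal.add_bot] at hG
      exact EReal.bot_ne_coe G hG
  obtain ⟨ω, hω⟩ := hω
  have hG' : f (mv X β) + fs + lam * (ω + Ωs) = G := by
    rw [hω] at hG; exact_mod_cast hG
  -- Fenchel–Young for f
  have hFY1 : ∀ x : Vec n, -lam * ⟪θ, x⟫ - f x ≤ fs := by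
    intro x
    have h := le_iSup (fun x : Vec n => ((⟪(-lam) • θ, x⟫ - f x : ℝ) : EReal)) x
    rw [← rconj, hfs] at h
    have h' : ⟪(-lam) • θ, x⟫ - f x ≤ fs := by exact_mod_cast h
    rwa [real_inner_smul_left] at h'
  -- Fenchel–Young for Ω
  have hFY2 : ∀ (b : Vec p) (w : ℝ), Ω b = (w : EReal) → ⟪θ, mv X b⟫ - w ≤ Ωs := by
    intro b w hw
    have h := le_iSup (fun b : Vec p => ((⟪mv X.transpose θ, b⟫ : ℝ) : EReal) - Ω b) b
    rw [← econj, hΩs] at h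
    simp only [hw, ← EReal.coe_sub] at h
    have h' : ⟪mv X.transpose θ, b⟫ - w ≤ Ωs := by exact_mod_cast h
    rwa [mv_adjoint] at h'
  -- weak duality at bhat
  have hwd : 0 ≤ r + fs + lam * Ωs := by
    have h1 := hFY1 (mv X bhat)
    have h2 := hFY2 bhat ωh hωh
    nlinarith [hr', mul_le_mul_of_nonneg_left h2 hlam.le]
  set Pβ := f (mv X β) + lam * ω with hPβ
  set c := μ / 2 * ‖β - bhat‖^2 with hc
  have hc0 : 0 ≤ c := by positivity
  -- strong convexity inequality: r + c ≤ Pβ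
  have hkey : ∀ t : ℝ, 0 < t → t < 1 → r + (1 - t) * c ≤ Pβ := by
    intro t ht ht1
    set bt := t • β + (1 - t) • bhat with hbt
    have hsc' := hsc β bhat t ht.le ht1.le
    have hmin' := hmin bt
    -- Ω bt finite
    have hωt : ∃ w : ℝ, Ω bt = (w : EReal) := by
      refine ⟨(Ω bt).toReal, (EReal.coe_toReal ?_ ?_).symm⟩
      · intro h
        simp only at hsc'
        rw [Pfun, h, EReal.coe_mul_top_of_pos hlam, EReal.coe_add_top, EReal.top_sub_coe,
          Pfun, Pfun, hω, hωh] at hsc'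
        rw [hr] at hmin'
        simp only [← EReal.coe_mul, ← EReal.coe_sub, ← EReal.coe_add, top_le_iff] at hsc'
        exact EReal.top_ne_coe _ hsc'.symm
      · intro h
        rw [hr, Pfun, h, EReal.coe_mul_bot_of_pos hlam, EReal.add_bot, le_bot_iff] at hmin'
        exact EReal.coe_ne_bot _ hmin'
    obtain ⟨ωt, hωt⟩ := hωt
    -- real versions
    have hmin'' : r ≤ f (mv X bt) + lam * ωt := by
      rw [hr, Pfun, hωt, ← EReal.coe_mul, ← EReal.coe_add] at hmin'
      exact_mod_cast hmin'
    have hsc'' : f (mv X bt) + lam * ωt - μ/2 * ‖bt‖^2 ≤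
        t * (f (mv X β) + lam * ω - μ/2 * ‖β‖^2)
          + (1 - t) * (f (mv X bhat) + lam * ωh - μ/2 * ‖bhat‖^2) := by
      simp only at hsc'
      rw [Pfun, Pfun, Pfun, hω, hωh, hωt] at hsc'
      exact_mod_cast hsc'
    have hnorm : ‖bt‖^2 = t*‖β‖^2 + (1-t)*‖bhat‖^2 - t*(1-t)*‖β-bhat‖^2 :=
      comb_norm_sq t β bhat
    -- combine
    have hcomb : t * (r + (1 - t) * c) ≤ t * Pβ := by
      rw [hc, hPβ]; nlinarith [hmin'', hsc'', hnorm, hr']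
    exact le_of_mul_le_mul_left hcomb ht
  have hsc_final : r + c ≤ Pβ := by
    rcases eq_or_lt_of_le hc0 with h0 | hcpos
    · have := hkey (1/2) (by norm_num) (by norm_num)
      rw [← h0] at this ⊢; linarith
    · by_contra hcon
      push_neg at hcon
      set ε := r + c - Pβ with hε
      have hε0 : 0 < ε := by linarith
      set t := min (1/2) (ε / (2 * c)) with htdef
      have ht0 : 0 < t := lt_min (by norm_num) (by positivity)
      have ht1 : t < 1 := lt_of_le_of_lt (min_le_left _ _) (by norm_num)
      have h := hkey t ht0 ht1
      have htc : t * c ≤ ε / 2 := by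
        have : t ≤ ε / (2 * c) := min_le_right _ _
        calc t * c ≤ (ε / (2 * c)) * c := by nlinarith
          _ = ε / 2 := by field_simp
      nlinarith [h]
  -- conclude
  have hGc : c ≤ G := by
    have := hkey  -- unused; use hsc_final and hwd
    nlinarith [hsc_final, hwd, hG']
  have hG0 : 0 ≤ G := le_trans hc0 hGc
  refine ⟨hG0, ?_⟩
  rw [norm_sub_rev]
  have hsq : ‖β - bhat‖^2 ≤ 2 * G / μ := by
    rw [hc] at hGc
    rw [le_div_iff₀ hμ]
    nlinarith [hGc]
  calc ‖β - bhat‖ = Real.sqrt (‖β - bhat‖^2) := by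
        rw [Real.sqrt_sq (norm_nonneg _)]
    _ ≤ Real.sqrt (2 * G / μ) := Real.sqrt_le_sqrt hsq

end
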